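/- Shanin's principle for assemblies: every subobject of an assembly (X, χ) in the category of assemblies is covered by a ¬¬-closed one. Concretely, given a function Y : X × ℕ → P(ℕ) representing a subobject of (X,χ) × ℕ (with a tracking code r such that every m ∈ Y(x,n) satisfies r(m) = ⟨k₀,k₁⟩ with k₀ ∈ χ(x) and k₁ = n), the partitioned assembly P = {(x,n) : n = ⟨n₀,n₁⟩ and n₁ ∈ Y(x,n₀)} with π(x,n) = {⟨k₀,n⟩ : k₀ ∈ χ(x)} admits a tracked surjection onto the subobject Y commuting with the projections to X. -/

import Mathlib

/-- Kleene application: evaluate the partial recursive function with code `n` at `m`. -/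
def kapp (n m : ℕ) : Part ℕ := (Denumerable.ofNat Nat.Partrec.Code n).eval m

/-- An assembly over Kleene's first algebra. -/
structure Assembly where
  carrier : Type
  rel : ℕ → carrier → Prop
  surj : ∀ a, ∃ n, rel n a

/-- `r` tracks the function `f` between assemblies. -/
def Tracks (B A : Assembly) (r : ℕ) (f : B.carrier → A.carrier) : Prop :=
  ∀ b n, B.rel n b → ∃ k, k ∈ kapp r n ∧ A.rel k (f b)

/-- A function between assemblies is tracked (is a morphism of assemblies). -/
def Tracked (B A : Assembly) (f : B.carrier → A.carrier) : Prop :=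
  ∃ r, Tracks B A r f

/-- `f` is a cover: realizers of `a` are recursively transformed into realizers of
elements of the fiber over `a`. -/
def IsCover (B A : Assembly) (f : B.carrier → A.carrier) : Prop :=
  ∃ s : ℕ, ∀ a n, A.rel n a → ∃ b, f b = a ∧ ∃ k, k ∈ kapp s n ∧ B.rel k b

variable (X : Assembly) (Y : X.carrier × ℕ → Set ℕ)

/-- The subobject of `(X, χ) × ℕ` represented by the realizer assignment `Y`. -/
def subAsm : Assembly where
  carrier := {p : X.carrier × ℕ // (Y p).Nonempty}
  rel m p := m ∈ Y p.val
  surj p := p.property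

/-- Shanin's `¬¬`-closed partitioned refinement
`P = {(x, n) : n₁ ∈ Y(x, n₀)}` with `π(x, n) = {⟨k₀, n⟩ : k₀ ∈ χ(x)}`. -/
def shaninAsm : Assembly where
  carrier := {p : X.carrier × ℕ // p.2.unpair.2 ∈ Y (p.1, p.2.unpair.1)}
  rel m p := ∃ k₀, X.rel k₀ p.val.1 ∧ m = Nat.pair k₀ p.val.2
  surj := by
    rintro ⟨⟨x, n⟩, _⟩
    obtain ⟨k₀, hk⟩ := X.surj x
    exact ⟨Nat.pair k₀ n, k₀, hk, rfl⟩

/-- The canonical comparison map from `P` to the subobject `Y`. -/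
def shaninMap : (shaninAsm X Y).carrier → (subAsm X Y).carrier :=
  fun p => ⟨(p.val.1, p.val.2.unpair.1), ⟨p.val.2.unpair.2, p.property⟩⟩

/-- Shanin's principle for assemblies: every subobject of an assembly `(X, χ)` (here a
subobject `Y` of `(X, χ) × ℕ`, with a tracking code `r` sending every realizer
`m ∈ Y(x, n)` to a pair `⟨k₀, k₁⟩` with `k₀ ∈ χ(x)` and `k₁ = n`) is covered by the
`¬¬`-closed partitioned assembly `P`: the comparison map is a tracked surjective
cover commuting with the projections to `X`. -/

lemma kapp_code (f : ℕ → Part ℕ) (hf : Nat.Partrec f) : ∃ c : ℕ, ∀ m, kapp c m = f m := by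
  obtain ⟨c, hc⟩ := Nat.Partrec.Code.exists_code.mp hf
  exact ⟨Encodable.encode c, fun m => by simp [kapp, hc]⟩

theorem shanin_principle (r : ℕ)
    (hr : ∀ (x : X.carrier) (n m : ℕ), m ∈ Y (x, n) →
      ∃ k, k ∈ kapp r m ∧ X.rel k.unpair.1 x ∧ k.unpair.2 = n) :
    Tracked (shaninAsm X Y) (subAsm X Y) (shaninMap X Y) ∧
    IsCover (shaninAsm X Y) (subAsm X Y) (shaninMap X Y) ∧
    Function.Surjective (shaninMap X Y) ∧
    ∀ p, ((shaninMap X Y) p).val.1 = p.val.1 := by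
  refine ⟨?_, ?_, ?_, fun p => rfl⟩
  · -- tracked: m ↦ m.unpair.2.unpair.2
    obtain ⟨c, hc⟩ := kapp_code (fun m => Part.some m.unpair.2.unpair.2)
      (Nat.Partrec.of_primrec (Primrec.nat_iff.mp
        ((Primrec.snd.comp Primrec.unpair).comp
          (Primrec.snd.comp Primrec.unpair))))
    refine ⟨c, ?_⟩
    rintro ⟨⟨x, n⟩, hp⟩ m ⟨k₀, hk₀, rfl⟩
    refine ⟨n.unpair.2, ?_, ?_⟩
    · rw [hc]; simp
    · exact hp
  · -- cover
    have hr' : Nat.Partrec fun m => (kapp r m).map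
        (fun k => Nat.pair k.unpair.1 (Nat.pair k.unpair.2 m)) := by
      have h1 : Partrec (kapp r) := Partrec.nat_iff.mpr
        (Nat.Partrec.Code.exists_code.mpr
          ⟨Denumerable.ofNat Nat.Partrec.Code r, rfl⟩)
      have h2 : Computable₂ fun (m k : ℕ) =>
          Nat.pair k.unpair.1 (Nat.pair k.unpair.2 m) := by
        apply Primrec₂.to_comp
        exact Primrec₂.natPair.comp
          ((Primrec.fst.comp Primrec.unpair).comp Primrec.snd)
          (Primrec₂.natPair.comp
            ((Primrec.snd.comp Primrec.unpair).comp Primrec.snd) Primrec.fst)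
      exact Partrec.nat_iff.mp (h1.map h2)
    obtain ⟨s, hs⟩ := kapp_code _ hr'
    refine ⟨s, ?_⟩
    rintro ⟨⟨x, n⟩, hne⟩ m hm
    obtain ⟨k, hk, hkx, hkn⟩ := hr x n m hm
    have hmem : (Nat.pair n m).unpair.2 ∈ Y (x, (Nat.pair n m).unpair.1) := by
      simp only [Nat.unpair_pair]; exact hm
    refine ⟨⟨(x, Nat.pair n m), hmem⟩, ?_, ?_⟩
    · apply Subtype.ext
      simp [shaninMap]
    · refine ⟨Nat.pair k.unpair.1 (Nat.pair k.unpair.2 m), ?_, ?_⟩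
      · rw [hs]
        exact Part.mem_map _ hk
      · exact ⟨k.unpair.1, hkx, by rw [hkn]⟩
  · rintro ⟨⟨x, n⟩, m, hm⟩
    have hmem : (Nat.pair n m).unpair.2 ∈ Y (x, (Nat.pair n m).unpair.1) := by
      simpa using hm
    refine ⟨⟨(x, Nat.pair n m), hmem⟩, ?_⟩
    apply Subtype.ext
    simp [shaninMap]
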